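/- arXiv:2011.00295 — 2 statements merged into one kernel-verified Lean document; each statement's English description precedes it below -/
import Mathlib

section
/- Let F be the free group on a family of generators w_k indexed by k ∈ ℤ, and let φ : F → (ℤ/2) × (ℤ/2) be the homomorphism sending w_k to (1, k mod 2). Then the kernel of φ equals the normal closure in F of the set {w₀², w₁², [w₀, w₁]} ∪ {w_m · w_{m-2}⁻¹ : m ∈ ℤ}. -/
/-- Generators `w_k`, `k ∈ ℤ`, of the free group on a `ℤ`-indexed set. -/
def w (k : ℤ) : FreeGroup ℤ := FreeGroup.of k

/-- The homomorphism `F → (ℤ/2) × (ℤ/2)` sending `w_k ↦ (1, k mod 2)`. -/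
def φ : FreeGroup ℤ →* Multiplicative (ZMod 2 × ZMod 2) :=
  FreeGroup.lift fun k : ℤ => Multiplicative.ofAdd ((1 : ZMod 2), (k : ZMod 2))

/-- auxiliary relator set -/
def Rset : Set (FreeGroup ℤ) :=
  ({w 0 ^ 2, w 1 ^ 2, (w 0)⁻¹ * (w 1)⁻¹ * w 0 * w 1} ∪
    {x : FreeGroup ℤ | ∃ m : ℤ, x = w m * (w (m - 2))⁻¹})

lemma pow_val_add {G : Type*} [Group G] (x : G) (hx : x * x = 1) (m n : ZMod 2) :
    x ^ ((m + n).val) = x ^ m.val * x ^ n.val := by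
  have h : ∀ a : ZMod 2, a = 0 ∨ a = 1 := by decide
  rcases h m with rfl | rfl <;> rcases h n with rfl | rfl <;>
    simp only [show ((0 + 0 : ZMod 2)).val = 0 from by decide,
      show ((0 + 1 : ZMod 2)).val = 1 from by decide,
      show ((1 + 0 : ZMod 2)).val = 1 from by decide,
      show ((1 + 1 : ZMod 2)).val = 0 from by decide,
      show ((0 : ZMod 2)).val = 0 from by decide,
      show ((1 : ZMod 2)).val = 1 from by decide,
      pow_zero, pow_one, one_mul, mul_one] <;>
    first | rfl | exact hx.symm

lemma ker_le : φ.ker ≤ Subgroup.normalClosure Rset := by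
  set N := Subgroup.normalClosure Rset with hNdef
  have hmem : ∀ y ∈ Rset, QuotientGroup.mk' N y = 1 := by
    intro y hy
    rw [QuotientGroup.mk'_apply, QuotientGroup.eq_one_iff]
    exact Subgroup.subset_normalClosure hy
  set π := QuotientGroup.mk' N with hπ
  set u := π (w 0) with hu
  set v := π (w 1) with hv
  have hu2 : u * u = 1 := by
    have := hmem (w 0 ^ 2) (Or.inl (by simp))
    rw [map_pow] at this; rw [hu, ← pow_two]; exact this
  have hv2 : v * v = 1 := by
    have := hmem (w 1 ^ 2) (Or.inl (by simp))
    rw [map_pow] at this; rw [hv, ← pow_two]; exact this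
  have hcomm : u * v = v * u := by
    have hrel := hmem ((w 0)⁻¹ * (w 1)⁻¹ * w 0 * w 1) (Or.inl (by simp))
    simp only [map_mul, map_inv] at hrel
    have h1 : u⁻¹ * v⁻¹ * u * v = 1 := hrel
    calc u * v = (v * u) * (u⁻¹ * v⁻¹ * u * v) := by group
      _ = v * u := by rw [h1, mul_one]
  have hstep : ∀ m : ℤ, π (w m) = π (w (m - 2)) := by
    intro m
    have := hmem (w m * (w (m - 2))⁻¹) (Or.inr ⟨m, rfl⟩)
    simp only [map_mul, map_inv] at this
    exact (mul_inv_eq_one.mp this)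
  have heven : ∀ n : ℤ, π (w (2 * n)) = u := by
    intro n
    induction n using Int.induction_on with
    | zero => simpa using hu.symm
    | succ k ih =>
      have := hstep (2 * (k + 1))
      rw [show (2 * ((k : ℤ) + 1) - 2) = 2 * k by ring] at this
      rw [this, ih]
    | pred k ih =>
      have := hstep (2 * (-k : ℤ))
      rw [show (2 * (-(k : ℤ)) - 2) = 2 * (-k - 1) by ring] at this
      rw [← this, ih]
  have hodd : ∀ n : ℤ, π (w (2 * n + 1)) = v := by
    intro n
    induction n using Int.induction_on with
    | zero => simpa using hv.symm
    | succ k ih =>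
      have := hstep (2 * (k + 1) + 1)
      rw [show (2 * ((k : ℤ) + 1) + 1 - 2) = 2 * k + 1 by ring] at this
      rw [this, ih]
    | pred k ih =>
      have := hstep (2 * (-k : ℤ) + 1)
      rw [show (2 * (-(k : ℤ)) + 1 - 2) = 2 * (-k - 1) + 1 by ring] at this
      rw [← this, ih]
  -- the section g
  have hcommpow : ∀ (a b : ℕ), u ^ a * v ^ b = v ^ b * u ^ a := fun a b =>
    ((Commute.pow_pow (hcomm) a b)).symm ▸ rfl
  have hcomm' : Commute u v := hcomm
  let g : Multiplicative (ZMod 2 × ZMod 2) →* (FreeGroup ℤ ⧸ N) :=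
    MonoidHom.mk'
      (fun p => u ^ ((p.toAdd.1 + p.toAdd.2).val) * v ^ (p.toAdd.2.val))
      (by
        have key : ∀ a b c d : ZMod 2,
            u ^ ((a + c + (b + d)).val) * v ^ ((b + d).val)
              = (u ^ ((a + b).val) * v ^ (b.val)) * (u ^ ((c + d).val) * v ^ (d.val)) := by
          intro a b c d
          have e1 : a + c + (b + d) = (a + b) + (c + d) := by ring
          rw [e1, pow_val_add u hu2, pow_val_add v hv2]
          have hc : Commute (v ^ b.val) (u ^ ((c + d).val)) := (hcomm'.symm.pow_pow _ _)
          rw [mul_assoc, mul_assoc, ← mul_assoc (v ^ b.val), hc.eq]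
          group
        intro p q
        exact key p.toAdd.1 p.toAdd.2 q.toAdd.1 q.toAdd.2)
  have hgφ : ∀ x : FreeGroup ℤ, g (φ x) = π x := by
    intro x
    have : (g.comp φ) = (π : FreeGroup ℤ →* FreeGroup ℤ ⧸ N) := by
      apply FreeGroup.ext_hom
      intro k
      show g (φ (FreeGroup.of k)) = π (FreeGroup.of k)
      rw [show φ (FreeGroup.of k) = Multiplicative.ofAdd ((1 : ZMod 2), (k : ZMod 2)) from
        FreeGroup.lift_apply_of]
      show u ^ (((1 : ZMod 2) + (k : ZMod 2)).val) * v ^ ((k : ZMod 2)).val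
          = π (FreeGroup.of k)
      rcases Int.even_or_odd k with ⟨n, hn⟩ | ⟨n, hn⟩
      · have hk2 : ((k : ZMod 2)) = 0 := by
          rw [ZMod.intCast_zmod_eq_zero_iff_dvd]; omega
        rw [hk2]
        have hπk : π (FreeGroup.of k) = u := by rw [show k = 2 * n by omega]; exact heven n
        rw [hπk]
        simp only [show ((1 + 0 : ZMod 2)).val = 1 from by decide,
          show ((0 : ZMod 2)).val = 0 from by decide, pow_one, pow_zero, mul_one]
      · have hk2 : ((k : ZMod 2)) = 1 := by
          have h0 : (((k - 1 : ℤ)) : ZMod 2) = 0 := by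
            rw [ZMod.intCast_zmod_eq_zero_iff_dvd]; omega
          push_cast at h0
          linear_combination h0
        rw [hk2]
        have hπk : π (FreeGroup.of k) = v := by rw [show k = 2 * n + 1 by omega]; exact hodd n
        rw [hπk]
        simp only [show ((1 + 1 : ZMod 2)).val = 0 from by decide,
          show ((1 : ZMod 2)).val = 1 from by decide, pow_one, pow_zero, one_mul]
    exact DFunLike.congr_fun this x
  intro x hx
  have hx1 : φ x = 1 := hx
  have : π x = 1 := by rw [← hgφ x, hx1, map_one]
  rwa [hπ, QuotientGroup.mk'_apply, QuotientGroup.eq_one_iff] at this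

/-- The kernel of `φ` is the normal closure of
`{w₀², w₁², [w₀,w₁]} ∪ {w_m w_{m-2}⁻¹ : m ∈ ℤ}`, with `[a,b] = a⁻¹b⁻¹ab`. -/
theorem stmt5 :
    φ.ker =
      Subgroup.normalClosure
        ({w 0 ^ 2, w 1 ^ 2, (w 0)⁻¹ * (w 1)⁻¹ * w 0 * w 1} ∪
          {x : FreeGroup ℤ | ∃ m : ℤ, x = w m * (w (m - 2))⁻¹}) := by
  apply le_antisymm
  · exact ker_le
  · apply Subgroup.normalClosure_le_normal
    rintro x (hx | ⟨m, rfl⟩)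
    · simp only [Set.mem_insert_iff, Set.mem_singleton_iff] at hx
      rcases hx with rfl | rfl | rfl <;>
        · show _ ∈ φ.ker
          simp only [MonoidHom.mem_ker, w, φ, map_pow, map_mul, map_inv, FreeGroup.lift_apply_of]
          decide
    · show _ ∈ φ.ker
      simp only [MonoidHom.mem_ker, w, φ, map_mul, map_inv, FreeGroup.lift_apply_of]
      rw [mul_inv_eq_one]
      have h2 : (((m - 2 : ℤ)) : ZMod 2) = (m : ZMod 2) := by
        push_cast
        have h0 : ((2 : ZMod 2)) = 0 := by decide
        rw [h0]; ring
      rw [h2]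
end

section
/- Let H = ℤ⁶ with the standard symplectic form and standard symplectic basis a₁, a₂, a₃, b₁, b₂, b₃, and let x = a₁. Then there are infinitely many 3-element subsets {c₁, c₂, c₃} of H such that c₁, c₂, c₃ form a basis of a Lagrangian subgroup of H and x = n₁c₁ + n₂c₂ + n₃c₃ for some positive integers n₁, n₂, n₃. -/
/-- `ℤ⁶` with its standard symplectic structure. -/
abbrev H : Type := (Fin 3 → ℤ) × (Fin 3 → ℤ)

/-- The standard symplectic form on `ℤ⁶`. -/
def B (x y : H) : ℤ := ∑ i, (x.1 i * y.2 i - x.2 i * y.1 i)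

/-- The homology class `x = a₁`. -/
def xcl : H := (Pi.single 0 1, 0)

/-- The Lagrangian subgroup: second component zero. -/
def Lag : Submodule ℤ H := (⊤ : Submodule ℤ (Fin 3 → ℤ)).prod ⊥

def c1 (k : ℕ) : H := (![1, -(k+1 : ℤ), -1], 0)
def c2 : H := (![0, 1, 0], 0)
def c3 : H := (![0, 0, 1], 0)

lemma mem_Lag (p : H) : p ∈ Lag ↔ p.2 = 0 := by
  simp [Lag, Submodule.mem_prod]

lemma good (k : ℕ) : {(c1 k), c2, c3} ∈ {S : Set H | ∃ c₁ c₂ c₃ : H,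
      S = {c₁, c₂, c₃} ∧
      LinearIndependent ℤ ![c₁, c₂, c₃] ∧
      (∃ L : Submodule ℤ H,
        Submodule.span ℤ {c₁, c₂, c₃} = L ∧
        (∀ u ∈ L, ∀ w ∈ L, B u w = 0) ∧
        (∀ L' : Submodule ℤ H, (∀ u ∈ L', ∀ w ∈ L', B u w = 0) → L ≤ L' → L' = L)) ∧
      ∃ n₁ n₂ n₃ : ℤ, 0 < n₁ ∧ 0 < n₂ ∧ 0 < n₃ ∧
        xcl = n₁ • c₁ + n₂ • c₂ + n₃ • c₃} := by
  refine ⟨c1 k, c2, c3, rfl, ?_, ⟨Lag, ?_, ?_, ?_⟩, 1, k+1, 1, one_pos, by positivity, one_pos, ?_⟩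
  · rw [Fintype.linearIndependent_iff]
    intro g hg i
    have h0 := congrFun (congrArg Prod.fst hg) 0
    have h1 := congrFun (congrArg Prod.fst hg) 1
    have h2 := congrFun (congrArg Prod.fst hg) 2
    simp [Fin.sum_univ_three, c1, c2, c3] at h0 h1 h2
    fin_cases i <;> simp_all <;> omega
  · apply le_antisymm
    · rw [Submodule.span_le]
      intro p hp
      rcases hp with h | h | h <;> subst h <;> simp [mem_Lag, c1, c2, c3]
    · intro p hp
      rw [mem_Lag] at hp
      have hp2 : p = p.1 0 • c1 k + (p.1 1 + (k+1) * p.1 0) • c2 + (p.1 2 + p.1 0) • c3 := by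
        refine Prod.ext ?_ ?_
        · funext i; fin_cases i <;> simp [c1, c2, c3] <;> ring
        · simp [c1, c2, c3, hp]
      rw [hp2]
      refine add_mem (add_mem (Submodule.smul_mem _ _ ?_) (Submodule.smul_mem _ _ ?_))
        (Submodule.smul_mem _ _ ?_) <;>
        apply Submodule.subset_span <;> simp
  · intro u hu w hw
    rw [mem_Lag] at hu hw
    simp [B, hu, hw]
  · intro L' hiso hle
    refine le_antisymm ?_ hle
    intro p hp
    rw [mem_Lag]
    funext i
    have hai : ((Pi.single i 1, 0) : H) ∈ L' := by
      apply hle; rw [mem_Lag]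
    have := hiso _ hai p hp
    simpa [B, Fin.sum_univ_three, Pi.single_apply] using this
  · refine Prod.ext ?_ ?_
    · funext i; fin_cases i <;>
        simp [xcl, c1, c2, c3, Pi.single_apply] <;> ring
    · simp [xcl, c1, c2, c3]

/-- There are infinitely many 3-element subsets `{c₁,c₂,c₃}` of `ℤ⁶` forming a basis of
a Lagrangian (maximal isotropic) subgroup with `x = n₁c₁ + n₂c₂ + n₃c₃` for some
positive integers `n₁, n₂, n₃`. -/
theorem stmt17 :
    Set.Infinite {S : Set H | ∃ c₁ c₂ c₃ : H,
      S = {c₁, c₂, c₃} ∧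
      LinearIndependent ℤ ![c₁, c₂, c₃] ∧
      (∃ L : Submodule ℤ H,
        Submodule.span ℤ {c₁, c₂, c₃} = L ∧
        (∀ u ∈ L, ∀ w ∈ L, B u w = 0) ∧
        (∀ L' : Submodule ℤ H, (∀ u ∈ L', ∀ w ∈ L', B u w = 0) → L ≤ L' → L' = L)) ∧
      ∃ n₁ n₂ n₃ : ℤ, 0 < n₁ ∧ 0 < n₂ ∧ 0 < n₃ ∧
        xcl = n₁ • c₁ + n₂ • c₂ + n₃ • c₃} := by
  apply Set.infinite_of_injective_forall_mem
    (f := fun k : ℕ => ({(c1 k), c2, c3} : Set H)) ?_ good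
  intro k k' h
  simp only at h
  have h1 : c1 k ∈ ({(c1 k'), c2, c3} : Set H) := h ▸ Set.mem_insert _ _
  rcases h1 with h1 | h1 | h1
  · have := congrFun (congrArg Prod.fst h1) 1
    simp [c1] at this; omega
  · have := congrFun (congrArg Prod.fst h1) 0
    simp [c1, c2] at this
  · have := congrFun (congrArg Prod.fst h1) 0
    simp [c1, c3] at this
end
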